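/- Let G = (V, E, w, μ) be a submodular hypergraph and p ≥ 1. For a nonconstant vector x ∈ ℝ^N define c(x) = inf over θ ∈ [min_v x_v, max_v x_v) of c(Θ(x, θ)), where Θ(x, θ) = {v : x_v > θ}. If x satisfies ‖x‖_{ℓp,μ}^p = Z_{p,μ}(x), i.e., c = 0 minimizes c ↦ ‖x − c·𝟙‖_{ℓp,μ}^p, then c(x) ≤ p · τ^{(p−1)/p} · 𝓡_p(x)^{1/p}, where τ = max_v d_v/μ_v and d_v = Σ_{e∈E : v∈e} θ_e. -/

import Mathlib

open scoped BigOperators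
open Finset

noncomputable section

/-- A set function on the ground set `Fin N` is submodular:
`F(S ∪ T) + F(S ∩ T) ≤ F(S) + F(T)` for all `S, T`. -/
def Submodular {N : ℕ} (F : Finset (Fin N) → ℝ) : Prop :=
  ∀ S T : Finset (Fin N), F (S ∪ T) + F (S ∩ T) ≤ F S + F T

/-- The Lovász extension of a set function, written in its (tie-breaking independent)
level-set integral form, which agrees with the usual sorted-sum definition
`f(x) = Σ_{j=1}^{N-1} F({i_1,…,i_j})(x_{i_j} − x_{i_{j+1}})` for a nonincreasing
ordering `x_{i_1} ≥ … ≥ x_{i_N}`. -/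
def lovasz {N : ℕ} (F : Finset (Fin N) → ℝ) (x : Fin N → ℝ) : ℝ :=
  ∫ t in (⨅ v, x v)..(⨆ v, x v), F (Finset.univ.filter fun v => t < x v)

/-- The inner product `⟨y, x⟩ = Σ_v y_v x_v`. -/
def dotp {N : ℕ} (y x : Fin N → ℝ) : ℝ := ∑ v, y v * x v

/-- The set of subgradients of `f : ℝ^N → ℝ` at `x`. -/
def subgradients {N : ℕ} (f : (Fin N → ℝ) → ℝ) (x : Fin N → ℝ) : Set (Fin N → ℝ) :=
  {y | ∀ x', dotp y (x' - x) ≤ f x' - f x}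

/-- The base polytope of a set function: `y(S) ≤ F(S)` for all `S ⊆ V` and `y(V) = 0`. -/
def basePolytope {N : ℕ} (F : Finset (Fin N) → ℝ) : Set (Fin N → ℝ) :=
  {y | (∀ S : Finset (Fin N), ∑ v ∈ S, y v ≤ F S) ∧ ∑ v, y v = 0}

/-- The sign function (`sgn 0 = 0`). -/
def sgn (a : ℝ) : ℝ := if 0 < a then 1 else if a < 0 then -1 else 0

/-- A vector is nonconstant. -/
def Nonconstant {N : ℕ} (x : Fin N → ℝ) : Prop := ∃ u v, x u ≠ x v

/-- Restriction of a vector to a subset of vertices (zero outside that subset). -/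
def restrictVec {N : ℕ} (x : Fin N → ℝ) (C : Finset (Fin N)) : Fin N → ℝ :=
  fun v => if v ∈ C then x v else 0

/-- Euclidean norm on `ℝ^N`. -/
def l2norm {N : ℕ} (z : Fin N → ℝ) : ℝ := Real.sqrt (∑ v, z v ^ 2)

/-- Supremum norm on `ℝ^N`. -/
def linfNorm {N : ℕ} (z : Fin N → ℝ) : ℝ := ⨆ v, |z v|

/-- A submodular hypergraph `G = (V, E, w, μ)` on `V = Fin N`: hyperedges `E`,
positive vertex weights `μ`, and for each hyperedge `e ∈ E` a scalar `θ_e > 0`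
together with a normalized symmetric submodular weight `w_e : 2^e → [0,1]`
(extended to all of `2^V` by `w_e(S) = w_e(S ∩ e)`). -/
structure SubmodularHypergraph (N : ℕ) where
  E : Finset (Finset (Fin N))
  μ : Fin N → ℝ
  μ_pos : ∀ v, 0 < μ v
  θ : Finset (Fin N) → ℝ
  θ_pos : ∀ e ∈ E, 0 < θ e
  w : Finset (Fin N) → Finset (Fin N) → ℝ
  w_inter : ∀ e ∈ E, ∀ S, w e S = w e (S ∩ e)
  w_submodular : ∀ e ∈ E, Submodular (w e)
  w_nonneg : ∀ e ∈ E, ∀ S, 0 ≤ w e S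
  w_le_one : ∀ e ∈ E, ∀ S, w e S ≤ 1
  w_empty : ∀ e ∈ E, w e ∅ = 0
  w_normalized : ∀ e ∈ E, ∃ S ⊆ e, w e S = 1
  w_symm : ∀ e ∈ E, ∀ S ⊆ e, w e S = w e (e \ S)

namespace SubmodularHypergraph

variable {N : ℕ} (G : SubmodularHypergraph N)

/-- `vol(S) = Σ_{v ∈ S} μ_v`. -/
def vol (S : Finset (Fin N)) : ℝ := ∑ v ∈ S, G.μ v

/-- `vol(∂S) = Σ_{e ∈ E} θ_e w_e(S)`. -/
def volB (S : Finset (Fin N)) : ℝ := ∑ e ∈ G.E, G.θ e * G.w e S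

/-- The Lovász extension `f_e` of the hyperedge weight `w_e`. -/
def fe (e : Finset (Fin N)) (x : Fin N → ℝ) : ℝ := lovasz (G.w e) x

/-- `Q_p(x) = Σ_{e ∈ E} θ_e f_e(x)^p`. -/
def Q (p : ℝ) (x : Fin N → ℝ) : ℝ := ∑ e ∈ G.E, G.θ e * G.fe e x ^ p

/-- `‖x‖_{ℓp,μ}^p = Σ_v μ_v |x_v|^p`. -/
def normLpPow (p : ℝ) (x : Fin N → ℝ) : ℝ := ∑ v, G.μ v * |x v| ^ p

/-- `G` is connected: `vol(∂S) > 0` for all nonempty proper `S ⊂ V`. -/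
def Connected : Prop :=
  ∀ S : Finset (Fin N), S.Nonempty → S ≠ Finset.univ → 0 < G.volB S

/-- Vertices `u, v` are connected in `G`: every `S` with `u ∈ S`, `v ∉ S` has
`vol(∂S) > 0`. -/
def VertConnected (u v : Fin N) : Prop :=
  ∀ S : Finset (Fin N), u ∈ S → v ∉ S → 0 < G.volB S

/-- The conductance `c(S) = vol(∂S) / min{vol(S), vol(V∖S)}`. -/
def conductance (S : Finset (Fin N)) : ℝ := G.volB S / min (G.vol S) (G.vol Sᶜ)

/-- The degree `d_v = Σ_{e ∈ E : v ∈ e} θ_e`. -/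
def degree (v : Fin N) : ℝ := ∑ e ∈ G.E.filter (fun e => v ∈ e), G.θ e

/-- `τ = max_v d_v / μ_v`. -/
def tau : ℝ := ⨆ v, G.degree v / G.μ v

/-- `G` is homogeneous: `w_e(S) = 1` for every `S ∈ 2^e ∖ {∅, e}`. -/
def Homogeneous : Prop :=
  ∀ e ∈ G.E, ∀ S ⊆ e, S ≠ ∅ → S ≠ e → G.w e S = 1

/-- `(λ, x)` is an eigenpair of the `p`-Laplacian `△_p` (for `p > 1` and for `p = 1`). -/
def IsEigenpair (p lam : ℝ) (x : Fin N → ℝ) : Prop :=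
  x ≠ 0 ∧
  ∃ y : Finset (Fin N) → Fin N → ℝ,
    (∀ e ∈ G.E, y e ∈ basePolytope (G.w e) ∧
        ∀ z ∈ basePolytope (G.w e), dotp z x ≤ dotp (y e) x) ∧
    (if 1 < p then
        ∀ v, ∑ e ∈ G.E, G.θ e * G.fe e x ^ (p - 1) * y e v
              = lam * G.μ v * (|x v| ^ (p - 1) * sgn (x v))
      else
        (∀ v, x v ≠ 0 → ∑ e ∈ G.E, G.θ e * y e v = lam * G.μ v * sgn (x v)) ∧
        (∀ v, x v = 0 → |∑ e ∈ G.E, G.θ e * y e v| ≤ lam * G.μ v))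

/-- Vertices `u, v` are connected inside the induced sub-hypergraph `G[W]`
(the boundary volume in `G[W]` of `S ⊆ W` equals `Σ_{e ∈ E} θ_e w_e(S)`). -/
def VertConnectedIn (W : Finset (Fin N)) (u v : Fin N) : Prop :=
  u = v ∨ ∀ S ⊆ W, u ∈ S → v ∉ S → 0 < G.volB S

/-- `C` is (the vertex set of) a connected component of the induced sub-hypergraph `G[W]`. -/
def IsComponent (W C : Finset (Fin N)) : Prop :=
  C ⊆ W ∧ C.Nonempty ∧
    (∀ u ∈ C, ∀ v ∈ C, G.VertConnectedIn W u v) ∧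
    (∀ u ∈ C, ∀ v ∈ W, G.VertConnectedIn W u v → v ∈ C)

end SubmodularHypergraph

def posSupp {N : ℕ} (x : Fin N → ℝ) : Finset (Fin N) := Finset.univ.filter fun v => 0 < x v
def negSupp {N : ℕ} (x : Fin N → ℝ) : Finset (Fin N) := Finset.univ.filter fun v => x v < 0
def nonnegSupp {N : ℕ} (x : Fin N → ℝ) : Finset (Fin N) := Finset.univ.filter fun v => 0 ≤ x v
def nonposSupp {N : ℕ} (x : Fin N → ℝ) : Finset (Fin N) := Finset.univ.filter fun v => x v ≤ 0

namespace SubmodularHypergraph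

variable {N : ℕ} (G : SubmodularHypergraph N)

/-- The number of strong nodal domains of `x` (positive ones plus negative ones). -/
def strongNodalCount (x : Fin N → ℝ) : ℕ :=
  {C : Finset (Fin N) | G.IsComponent (posSupp x) C}.ncard +
  {C : Finset (Fin N) | G.IsComponent (negSupp x) C}.ncard

/-- The number of weak nodal domains of `x` (positive ones plus negative ones). -/
def weakNodalCount (x : Fin N → ℝ) : ℕ :=
  {C : Finset (Fin N) | G.IsComponent (nonnegSupp x) C}.ncard +
  {C : Finset (Fin N) | G.IsComponent (nonposSupp x) C}.ncard

/-- The collection of strong nodal domains of `x`. -/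
def strongNodalDomains (x : Fin N → ℝ) : Set (Finset (Fin N)) :=
  {C | G.IsComponent (posSupp x) C ∨ G.IsComponent (negSupp x) C}

/-- The collection of weak nodal domains of `x`. -/
def weakNodalDomains (x : Fin N → ℝ) : Set (Finset (Fin N)) :=
  {C | G.IsComponent (nonnegSupp x) C ∨ G.IsComponent (nonposSupp x) C}

/-- `Z_{p,μ}(x) = min_c ‖x − c·𝟙‖_{ℓp,μ}^p`. -/
def Z (p : ℝ) (x : Fin N → ℝ) : ℝ := ⨅ c : ℝ, ∑ v, G.μ v * |x v - c| ^ p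

/-- `𝓡_p(x) = Q_p(x) / Z_{p,μ}(x)`. -/
def Rq (p : ℝ) (x : Fin N → ℝ) : ℝ := G.Q p x / G.Z p x

/-- The `k`-way Cheeger constant `h_k`. -/
def cheegerConst (k : ℕ) : ℝ :=
  sInf {c : ℝ | ∃ S : Fin k → Finset (Fin N),
    (∀ i, (S i).Nonempty) ∧ (∀ i j, i ≠ j → Disjoint (S i) (S j)) ∧
    c = ⨆ i, G.conductance (S i)}

end SubmodularHypergraph

/-- There is an odd continuous map `h : A → ℝ^k ∖ {0}`. -/
def genusLE {N : ℕ} (A : Set (Fin N → ℝ)) (k : ℕ) : Prop :=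
  ∃ h : (Fin N → ℝ) → (Fin k → ℝ),
    ContinuousOn h A ∧ (∀ x ∈ A, h (-x) = -h x) ∧ ∀ x ∈ A, h x ≠ 0

/-- The Krasnoselski genus of a set. -/
def genus {N : ℕ} (A : Set (Fin N → ℝ)) : ℕ∞ :=
  sInf ((fun n : ℕ => (n : ℕ∞)) '' {n | genusLE A n})

namespace SubmodularHypergraph

variable {N : ℕ} (G : SubmodularHypergraph N)

/-- The `k`-th variational eigenvalue `λ_k^{(p)}` of `△_p`:
`min` over closed symmetric `A ⊆ S_{p,μ}` with `γ(A) ≥ k` of `max_{x ∈ A} Q_p(x)`. -/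
def varEigen (p : ℝ) (k : ℕ) : ℝ :=
  sInf ((fun A : Set (Fin N → ℝ) => sSup (G.Q p '' A)) ''
    {A | IsClosed A ∧ (∀ x ∈ A, -x ∈ A) ∧
         A ⊆ {x | G.normLpPow p x = 1} ∧ (k : ℕ∞) ≤ genus A})

end SubmodularHypergraph

section AuxLemmas
open MeasureTheory




/-- step functions built from level-set filters are measurable -/
lemma measurable_filter_step {N : ℕ} (F : Finset (Fin N) → ℝ) (x : Fin N → ℝ) :
    Measurable fun θ : ℝ => F (Finset.univ.filter fun v => θ < x v) := by
  have hrw : (fun θ : ℝ => F (Finset.univ.filter fun v => θ < x v))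
      = fun θ : ℝ => ∑ S ∈ (Finset.univ : Finset (Fin N)).powerset,
          if (Finset.univ.filter fun v => θ < x v) = S then F S else 0 := by
    funext θ
    rw [Finset.sum_ite_eq]
    simp
  rw [hrw]
  refine Finset.measurable_sum _ (fun S _ => ?_)
  refine Measurable.ite ?_ measurable_const measurable_const
  have : {θ : ℝ | (Finset.univ.filter fun v => θ < x v) = S}
      = ⋂ v : Fin N, {θ : ℝ | θ < x v ↔ v ∈ S} := by
    ext θ
    simp only [Set.mem_iInter, Set.mem_setOf_eq, Finset.ext_iff, Finset.mem_filter,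
      Finset.mem_univ, true_and]
  rw [this]
  refine MeasurableSet.iInter (fun v => ?_)
  by_cases hv : v ∈ S
  · have : {θ : ℝ | θ < x v ↔ v ∈ S} = Set.Iio (x v) := by
      ext θ; simp [hv]
    rw [this]; exact measurableSet_Iio
  · have : {θ : ℝ | θ < x v ↔ v ∈ S} = Set.Ici (x v) := by
      ext θ; simp [hv, not_lt]
    rw [this]; exact measurableSet_Ici

/-- bounded measurable functions are interval integrable -/
lemma II_of_bdd {f : ℝ → ℝ} {a b C : ℝ} (hm : Measurable f)
    (hC : ∀ θ ∈ Set.uIoc a b, |f θ| ≤ C) : IntervalIntegrable f volume a b := by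
  rw [intervalIntegrable_iff]
  refine MeasureTheory.Integrable.mono' (g := fun _ => C)
    ((integrableOn_const_iff (C := C)).mpr (Or.inr ?_)) hm.aestronglyMeasurable ?_
  · exact measure_Ioc_lt_top
  · exact (ae_restrict_iff' measurableSet_uIoc).mpr (ae_of_all _ (fun θ hθ => by
      simpa [Real.norm_eq_abs] using hC θ hθ))

lemma K1 {p c d : ℝ} (hp : 1 ≤ p) (hcd : c ≤ d) :
    ∫ θ in Set.Ioo c d, p * (θ - c) ^ (p - 1) = (d - c) ^ p := by
  have hcont : Continuous fun y : ℝ => y ^ (p - 1) :=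
    continuous_iff_continuousAt.mpr fun y =>
      Real.continuousAt_rpow_const y (p - 1) (Or.inr (by linarith))
  have h1 : ∫ θ in Set.Ioo c d, p * (θ - c) ^ (p - 1)
      = ∫ θ in c..d, p * (θ - c) ^ (p - 1) := by
    rw [intervalIntegral.integral_of_le hcd, MeasureTheory.integral_Ioc_eq_integral_Ioo]
  rw [h1]
  have hderiv : ∀ θ ∈ Set.uIcc c d,
      HasDerivAt (fun u : ℝ => (u - c) ^ p) (p * (θ - c) ^ (p - 1)) θ := by
    intro θ hθ
    have h0 : (0:ℝ) ≤ θ - c := by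
      rw [Set.uIcc_of_le hcd] at hθ
      linarith [hθ.1]
    have := (Real.hasDerivAt_rpow_const (x := θ - c) (p := p) (Or.inr hp)).comp θ
      ((hasDerivAt_id θ).sub_const c)
    simpa [Function.comp_def] using this
  rw [intervalIntegral.integral_eq_sub_of_hasDerivAt hderiv ?_]
  · rw [sub_self, Real.zero_rpow (by positivity)]
    ring
  · exact (Continuous.intervalIntegrable
      (continuous_const.mul (hcont.comp (continuous_id.sub continuous_const))) c d)

lemma K2 {p c d : ℝ} (hp : 1 ≤ p) (hcd : c ≤ d) :
    ∫ θ in Set.Ioo c d, p * (d - θ) ^ (p - 1) = (d - c) ^ p := by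
  have hcont : Continuous fun y : ℝ => y ^ (p - 1) :=
    continuous_iff_continuousAt.mpr fun y =>
      Real.continuousAt_rpow_const y (p - 1) (Or.inr (by linarith))
  have h1 : ∫ θ in Set.Ioo c d, p * (d - θ) ^ (p - 1)
      = ∫ θ in c..d, p * (d - θ) ^ (p - 1) := by
    rw [intervalIntegral.integral_of_le hcd, MeasureTheory.integral_Ioc_eq_integral_Ioo]
  rw [h1]
  have hderiv : ∀ θ ∈ Set.uIcc c d,
      HasDerivAt (fun u : ℝ => -((d - u) ^ p)) (p * (d - θ) ^ (p - 1)) θ := by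
    intro θ hθ
    have := ((Real.hasDerivAt_rpow_const (x := d - θ) (p := p) (Or.inr hp)).comp θ
      ((hasDerivAt_const θ d).sub (hasDerivAt_id θ))).neg
    exact (this.congr_deriv (by ring)).congr_of_eventuallyEq (Filter.Eventually.of_forall fun u => rfl)
  rw [intervalIntegral.integral_eq_sub_of_hasDerivAt hderiv ?_]
  · rw [sub_self, Real.zero_rpow (by positivity)]
    ring
  · exact (Continuous.intervalIntegrable
      (continuous_const.mul (hcont.comp (continuous_const.sub continuous_id))) c d)


lemma cont_weight {p : ℝ} (γ : ℝ) (hp : 1 ≤ p) :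
    Continuous fun θ : ℝ => p * |θ - γ| ^ (p - 1) :=
  continuous_const.mul ((continuous_abs.comp (continuous_id.sub continuous_const)).rpow_const
    fun _ => Or.inr (by linarith))

lemma II_step_weight {f : ℝ → ℝ} (hf : Measurable f) (hb : ∀ θ, |f θ| ≤ 1)
    {p : ℝ} (γ : ℝ) (hp : 1 ≤ p) (c d : ℝ) :
    IntervalIntegrable (fun θ => f θ * (p * |θ - γ| ^ (p - 1))) volume c d := by
  refine II_of_bdd (hf.mul (cont_weight γ hp).measurable)
    (C := p * (|c| + |d| + |γ|) ^ (p - 1)) (fun θ hθ => ?_)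
  have hθ' : min c d < θ ∧ θ ≤ max c d := by
    rw [Set.uIoc] at hθ; exact ⟨hθ.1, hθ.2⟩
  have hθabs : |θ| ≤ |c| + |d| := by
    rw [abs_le]
    constructor
    · have : -(|c| + |d|) ≤ min c d := by
        rcases min_choice c d with h | h <;> rw [h] <;>
          [linarith [neg_abs_le c, abs_nonneg d]; linarith [neg_abs_le d, abs_nonneg c]]
      linarith [hθ'.1]
    · have : max c d ≤ |c| + |d| := by
        rcases max_choice c d with h | h <;> rw [h] <;>
          [linarith [le_abs_self c, abs_nonneg d]; linarith [le_abs_self d, abs_nonneg c]]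
      linarith [hθ'.2]
  have h1 : |θ - γ| ≤ |c| + |d| + |γ| := by
    calc |θ - γ| ≤ |θ| + |γ| := abs_sub _ _
      _ ≤ |c| + |d| + |γ| := by linarith
  calc |f θ * (p * |θ - γ| ^ (p - 1))| = |f θ| * |p * |θ - γ| ^ (p - 1)| := abs_mul _ _
    _ ≤ 1 * (p * (|c| + |d| + |γ|) ^ (p - 1)) := by
        refine mul_le_mul (hb θ) ?_ (abs_nonneg _) zero_le_one
        rw [abs_of_nonneg (by positivity)]
        refine mul_le_mul_of_nonneg_left ?_ (by linarith)
        exact Real.rpow_le_rpow (abs_nonneg _) h1 (by linarith)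
    _ = p * (|c| + |d| + |γ|) ^ (p - 1) := one_mul _

lemma holder_w {ι : Type*} (s : Finset ι) (w u m : ι → ℝ) {p : ℝ} (hp : 1 ≤ p)
    (hw : ∀ i ∈ s, 0 ≤ w i) (hu : ∀ i ∈ s, 0 ≤ u i) (hm : ∀ i ∈ s, 0 ≤ m i) :
    ∑ i ∈ s, w i * (u i * m i ^ (p - 1))
      ≤ (∑ i ∈ s, w i * u i ^ p) ^ (1 / p) * (∑ i ∈ s, w i * m i ^ p) ^ ((p - 1) / p) := by
  rcases eq_or_lt_of_le hp with hp1 | hp1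
  · subst hp1
    simp [Real.rpow_one]
  · have hq : Real.HolderConjugate p (p / (p - 1)) := Real.HolderConjugate.conjExponent hp1
    have hpne : p ≠ 0 := by positivity
    have hp1ne : p - 1 ≠ 0 := sub_ne_zero.mpr (ne_of_gt hp1)
    have key := Real.inner_le_Lp_mul_Lq s (fun i => w i ^ (1/p) * u i)
      (fun i => w i ^ (1/(p/(p-1))) * m i ^ (p-1)) hq
    have e1 : ∑ i ∈ s, (w i ^ (1/p) * u i) * (w i ^ (1/(p/(p-1))) * m i ^ (p-1))
        = ∑ i ∈ s, w i * (u i * m i ^ (p - 1)) := by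
      refine Finset.sum_congr rfl (fun i hi => ?_)
      have hsum : 1/p + 1/(p/(p-1)) = 1 := by
        field_simp
        ring
      have hwp : w i ^ (1/p) * w i ^ (1/(p/(p-1))) = w i := by
        rw [← Real.rpow_add' (hw i hi) (by rw [hsum]; norm_num)]
        rw [hsum, Real.rpow_one]
      calc (w i ^ (1/p) * u i) * (w i ^ (1/(p/(p-1))) * m i ^ (p-1))
          = (w i ^ (1/p) * w i ^ (1/(p/(p-1)))) * (u i * m i ^ (p-1)) := by ring
        _ = w i * (u i * m i ^ (p - 1)) := by rw [hwp]
    have e2 : ∑ i ∈ s, |w i ^ (1/p) * u i| ^ p = ∑ i ∈ s, w i * u i ^ p := by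
      refine Finset.sum_congr rfl (fun i hi => ?_)
      rw [abs_of_nonneg (mul_nonneg (Real.rpow_nonneg (hw i hi) _) (hu i hi)),
        Real.mul_rpow (Real.rpow_nonneg (hw i hi) _) (hu i hi),
        ← Real.rpow_mul (hw i hi), one_div_mul_cancel hpne, Real.rpow_one]
    have e3 : ∑ i ∈ s, |w i ^ (1/(p/(p-1))) * m i ^ (p-1)| ^ (p/(p-1))
        = ∑ i ∈ s, w i * m i ^ p := by
      refine Finset.sum_congr rfl (fun i hi => ?_)
      rw [abs_of_nonneg (mul_nonneg (Real.rpow_nonneg (hw i hi) _)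
        (Real.rpow_nonneg (hm i hi) _)),
        Real.mul_rpow (Real.rpow_nonneg (hw i hi) _) (Real.rpow_nonneg (hm i hi) _),
        ← Real.rpow_mul (hw i hi), one_div_mul_cancel (by positivity : p/(p-1) ≠ 0),
        Real.rpow_one, ← Real.rpow_mul (hm i hi)]
      congr 2
      field_simp
    have e4 : (1 : ℝ)/(p/(p-1)) = (p-1)/p := one_div_div _ _
    rw [e1, e2, e3, e4] at key
    exact key

lemma exists_median {N : ℕ} [NeZero N] (x : Fin N → ℝ) (μ : Fin N → ℝ)
    (hμ : ∀ v, 0 ≤ μ v) :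
    ∃ γ : ℝ, (∃ u, x u = γ) ∧
      2 * (∑ v ∈ univ.filter (fun v => γ < x v), μ v) ≤ ∑ v, μ v ∧
      2 * (∑ v ∈ univ.filter (fun v => x v < γ), μ v) ≤ ∑ v, μ v := by
  classical
  set V : ℝ := ∑ v, μ v with hV
  have hVnn : 0 ≤ V := Finset.sum_nonneg (fun v _ => hμ v)
  have hsplit : ∀ c : ℝ, (∑ v ∈ univ.filter (fun v => x v ≤ c), μ v)
      + (∑ v ∈ univ.filter (fun v => c < x v), μ v) = V := by
    intro c
    rw [hV, ← Finset.sum_filter_add_sum_filter_not univ (fun v => x v ≤ c) μ]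
    congr 1
    apply Finset.sum_congr _ (fun _ _ => rfl)
    apply Finset.filter_congr
    intro v _
    simp [not_le]
  set img := Finset.image x univ with himg
  have himgne : img.Nonempty := by
    refine ⟨x ⟨0, Nat.pos_of_ne_zero (NeZero.ne N)⟩, ?_⟩
    rw [himg]; exact Finset.mem_image_of_mem x (Finset.mem_univ _)
  set T := img.filter (fun c => V ≤ 2 * ∑ v ∈ univ.filter (fun v => x v ≤ c), μ v) with hT
  have hTne : T.Nonempty := by
    obtain ⟨c, hc, hcmax⟩ := img.exists_max_image id himgne
    refine ⟨c, Finset.mem_filter.mpr ⟨hc, ?_⟩⟩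
    have : univ.filter (fun v => x v ≤ c) = univ := by
      apply Finset.filter_true_of_mem
      intro v _
      exact hcmax (x v) (Finset.mem_image_of_mem x (Finset.mem_univ _))
    rw [this, ← hV]
    linarith
  set γ := T.min' hTne with hγ
  have hγT : γ ∈ T := T.min'_mem hTne
  have hγimg : γ ∈ img := (Finset.mem_filter.mp hγT).1
  have hγle : V ≤ 2 * ∑ v ∈ univ.filter (fun v => x v ≤ γ), μ v :=
    (Finset.mem_filter.mp hγT).2
  obtain ⟨u, _, hu⟩ := Finset.mem_image.mp hγimg
  refine ⟨γ, ⟨u, hu⟩, ?_, ?_⟩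
  · have := hsplit γ
    linarith
  · by_cases hne : (univ.filter (fun v => x v < γ)).Nonempty
    · -- let γ' be the largest value below γ
      set S := img.filter (fun c => c < γ) with hS
      have hSne : S.Nonempty := by
        obtain ⟨v, hv⟩ := hne
        have hvγ : x v < γ := (Finset.mem_filter.mp hv).2
        exact ⟨x v, Finset.mem_filter.mpr ⟨Finset.mem_image_of_mem x (Finset.mem_univ _), hvγ⟩⟩
      set γ' := S.max' hSne with hγ'
      have hγ'S : γ' ∈ S := S.max'_mem hSne
      have hγ'img : γ' ∈ img := (Finset.mem_filter.mp hγ'S).1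
      have hγ'lt : γ' < γ := (Finset.mem_filter.mp hγ'S).2
      have hγ'notT : γ' ∉ T := by
        intro h
        exact absurd (T.min'_le γ' h) (not_le.mpr hγ'lt)
      have hγ'bad : ¬ (V ≤ 2 * ∑ v ∈ univ.filter (fun v => x v ≤ γ'), μ v) := by
        intro h
        exact hγ'notT (Finset.mem_filter.mpr ⟨hγ'img, h⟩)
      push_neg at hγ'bad
      have hset : univ.filter (fun v => x v < γ) = univ.filter (fun v => x v ≤ γ') := by
        apply Finset.filter_congr
        intro v _
        constructor
        · intro hlt
          exact S.le_max' (x v)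
            (Finset.mem_filter.mpr ⟨Finset.mem_image_of_mem x (Finset.mem_univ _), hlt⟩)
        · intro hle
          exact lt_of_le_of_lt hle hγ'lt
      rw [hset]
      linarith
    · rw [Finset.not_nonempty_iff_eq_empty] at hne
      rw [hne]
      simp [hVnn]
lemma measurable_hv (γ xv : ℝ) :
    Measurable fun θ : ℝ => (if γ ≤ θ then (if θ < xv then (1:ℝ) else 0)
      else (if xv ≤ θ then 1 else 0)) := by
  refine Measurable.ite ?_ ?_ ?_
  · exact measurableSet_Ici
  · exact Measurable.ite measurableSet_Iio measurable_const measurable_const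
  · exact Measurable.ite measurableSet_Ici measurable_const measurable_const

lemma bdd_hv (γ xv : ℝ) : ∀ θ : ℝ, |(if γ ≤ θ then (if θ < xv then (1:ℝ) else 0)
      else (if xv ≤ θ then 1 else 0))| ≤ 1 := by
  intro θ
  split_ifs <;> simp

lemma hv_integral {p a b γ xv : ℝ} (hp : 1 ≤ p) (hax : a ≤ xv) (hxb : xv ≤ b)
    (haγ : a ≤ γ) (hγb : γ ≤ b) :
    ∫ θ in a..b, (if γ ≤ θ then (if θ < xv then (1:ℝ) else 0)
        else (if xv ≤ θ then 1 else 0)) * (p * |θ - γ| ^ (p - 1))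
      = |xv - γ| ^ p := by
  have hI1 := II_step_weight (measurable_hv γ xv) (bdd_hv γ xv) γ hp a γ
  have hI2 := II_step_weight (measurable_hv γ xv) (bdd_hv γ xv) γ hp γ b
  rw [← intervalIntegral.integral_add_adjacent_intervals hI1 hI2]
  have piece2 : ∫ θ in γ..b, (if γ ≤ θ then (if θ < xv then (1:ℝ) else 0)
        else (if xv ≤ θ then 1 else 0)) * (p * |θ - γ| ^ (p - 1))
      = max (xv - γ) 0 ^ p := by
    rw [intervalIntegral.integral_of_le hγb]
    have heq : Set.EqOn (fun θ => (if γ ≤ θ then (if θ < xv then (1:ℝ) else 0)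
          else (if xv ≤ θ then 1 else 0)) * (p * |θ - γ| ^ (p - 1)))
        (Set.indicator (Set.Iio xv) (fun θ => p * (θ - γ) ^ (p - 1))) (Set.Ioc γ b) := by
      intro θ hθ
      have h1 : γ ≤ θ := le_of_lt hθ.1
      have h2 : |θ - γ| = θ - γ := abs_of_nonneg (by linarith)
      simp only [Set.indicator_apply, Set.mem_Iio, if_pos h1, h2]
      split_ifs with h3 <;> simp
    rw [setIntegral_congr_fun measurableSet_Ioc heq,
      setIntegral_indicator measurableSet_Iio]
    by_cases hγx : γ < xv
    · have hset : Set.Ioc γ b ∩ Set.Iio xv = Set.Ioo γ xv := by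
        ext θ
        simp only [Set.mem_inter_iff, Set.mem_Ioc, Set.mem_Iio, Set.mem_Ioo]
        exact ⟨fun h => ⟨h.1.1, h.2⟩, fun h => ⟨⟨h.1, le_trans (le_of_lt h.2) hxb⟩, h.2⟩⟩
      rw [hset, K1 hp (le_of_lt hγx), max_eq_left (by linarith)]
    · have hset : Set.Ioc γ b ∩ Set.Iio xv = ∅ := by
        ext θ
        simp only [Set.mem_inter_iff, Set.mem_Ioc, Set.mem_Iio, Set.mem_empty_iff_false,
          iff_false, not_and]
        intro h1 h2
        push_neg at hγx
        linarith [h1.1]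
      rw [hset, max_eq_right (by push_neg at hγx; linarith)]
      simp [Real.zero_rpow (by positivity : p ≠ 0)]
  have piece1 : ∫ θ in a..γ, (if γ ≤ θ then (if θ < xv then (1:ℝ) else 0)
        else (if xv ≤ θ then 1 else 0)) * (p * |θ - γ| ^ (p - 1))
      = max (γ - xv) 0 ^ p := by
    rw [intervalIntegral.integral_of_le haγ, integral_Ioc_eq_integral_Ioo]
    have heq : Set.EqOn (fun θ => (if γ ≤ θ then (if θ < xv then (1:ℝ) else 0)
          else (if xv ≤ θ then 1 else 0)) * (p * |θ - γ| ^ (p - 1)))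
        (Set.indicator (Set.Ici xv) (fun θ => p * (γ - θ) ^ (p - 1))) (Set.Ioo a γ) := by
      intro θ hθ
      have h1 : ¬ γ ≤ θ := not_le.mpr hθ.2
      have h2 : |θ - γ| = γ - θ := by
        rw [abs_sub_comm]; exact abs_of_nonneg (by linarith [hθ.2])
      simp only [Set.indicator_apply, Set.mem_Ici, if_neg h1, h2]
      split_ifs with h3 <;> simp
    rw [setIntegral_congr_fun measurableSet_Ioo heq,
      setIntegral_indicator measurableSet_Ici]
    by_cases hxγ : xv < γ
    · have hval : ∫ θ in Set.Ioo a γ ∩ Set.Ici xv, p * (γ - θ) ^ (p - 1)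
          = ∫ θ in Set.Ioo xv γ, p * (γ - θ) ^ (p - 1) := by
        rcases eq_or_lt_of_le hax with hax' | hax'
        · have : Set.Ioo a γ ∩ Set.Ici xv = Set.Ioo xv γ := by
            ext θ
            simp only [Set.mem_inter_iff, Set.mem_Ioo, Set.mem_Ici]
            subst hax'
            exact ⟨fun h => ⟨h.1.1, h.1.2⟩, fun h => ⟨⟨h.1, h.2⟩, le_of_lt h.1⟩⟩
          rw [this]
        · have : Set.Ioo a γ ∩ Set.Ici xv = Set.Ico xv γ := by
            ext θ
            simp only [Set.mem_inter_iff, Set.mem_Ioo, Set.mem_Ici, Set.mem_Ico]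
            exact ⟨fun h => ⟨h.2, h.1.2⟩, fun h => ⟨⟨lt_of_lt_of_le hax' h.1, h.2⟩, h.1⟩⟩
          rw [this, integral_Ico_eq_integral_Ioo]
      rw [hval, K2 hp (le_of_lt hxγ), max_eq_left (by linarith)]
    · have hset : Set.Ioo a γ ∩ Set.Ici xv = ∅ := by
        ext θ
        simp only [Set.mem_inter_iff, Set.mem_Ioo, Set.mem_Ici, Set.mem_empty_iff_false,
          iff_false, not_and]
        intro h1 h2
        push_neg at hxγ
        linarith [h1.2]
      rw [hset, max_eq_right (by push_neg at hxγ; linarith)]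
      simp [Real.zero_rpow (by positivity : p ≠ 0)]
  rw [piece1, piece2]
  rcases le_or_gt γ xv with h | h
  · rw [max_eq_right (by linarith : γ - xv ≤ 0), max_eq_left (by linarith : (0:ℝ) ≤ xv - γ),
      abs_of_nonneg (by linarith : (0:ℝ) ≤ xv - γ), Real.zero_rpow (by positivity : p ≠ 0)]
    ring
  · rw [max_eq_left (by linarith : (0:ℝ) ≤ γ - xv), max_eq_right (by linarith : xv - γ ≤ 0),
      abs_of_nonpos (by linarith : xv - γ ≤ 0), Real.zero_rpow (by positivity : p ≠ 0),
      neg_sub]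
    ring

end AuxLemmas

open MeasureTheory in
set_option maxHeartbeats 2000000 in
/-- rounding / thresholding bound. If the nonconstant vector `x`
satisfies `‖x‖_{ℓp,μ}^p = Z_{p,μ}(x)` (i.e. `c = 0` minimizes `c ↦ ‖x − c𝟙‖_{ℓp,μ}^p`),
then the optimal thresholding conductance
`c(x) = inf_{θ ∈ [min x, max x)} c(Θ(x,θ))` satisfies
`c(x) ≤ p τ^{(p−1)/p} 𝓡_p(x)^{1/p}`. -/
theorem stmt16 {N : ℕ} (G : SubmodularHypergraph N) (p : ℝ) (hp : 1 ≤ p)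
    (x : Fin N → ℝ) (hnc : Nonconstant x)
    (hZ : G.normLpPow p x = G.Z p x) :
    sInf {c : ℝ | ∃ θ : ℝ, (⨅ v, x v) ≤ θ ∧ θ < (⨆ v, x v) ∧
        c = G.conductance (Finset.univ.filter fun v => θ < x v)}
      ≤ p * G.tau ^ ((p - 1) / p) * G.Rq p x ^ (1 / p) := by
  classical
  obtain ⟨u0, v0, huv⟩ := hnc
  haveI : NeZero N := ⟨fun h => by subst h; exact u0.elim0⟩
  have hp0 : (0:ℝ) < p := lt_of_lt_of_le zero_lt_one hp
  set a := ⨅ v, x v with ha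
  set b := ⨆ v, x v with hb
  have hbddb : BddBelow (Set.range x) := (Set.finite_range x).bddBelow
  have hbdda : BddAbove (Set.range x) := (Set.finite_range x).bddAbove
  have hax : ∀ v, a ≤ x v := fun v => ciInf_le hbddb v
  have hxb : ∀ v, x v ≤ b := fun v => le_ciSup hbdda v
  have hab : a < b := by
    rcases lt_or_gt_of_ne huv with h | h
    · exact lt_of_le_of_lt (hax u0) (lt_of_lt_of_le h (hxb v0))
    · exact lt_of_le_of_lt (hax v0) (lt_of_lt_of_le h (hxb u0))
  obtain ⟨vmax, hvmax⟩ : ∃ v, x v = b := by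
    obtain ⟨v, hv⟩ := Finite.exists_max x
    exact ⟨v, le_antisymm (hxb v) (ciSup_le hv)⟩
  obtain ⟨vmin, hvmin⟩ : ∃ v, x v = a := by
    obtain ⟨v, hv⟩ := Finite.exists_min x
    exact ⟨v, le_antisymm (le_ciInf hv) (hax v)⟩
  -- median
  obtain ⟨γ, ⟨uγ, huγ⟩, hmed1, hmed2⟩ := exists_median x G.μ (fun v => (G.μ_pos v).le)
  have haγ : a ≤ γ := huγ ▸ hax uγ
  have hγb : γ ≤ b := huγ ▸ hxb uγ
  set g : ℝ → ℝ := fun θ => p * |θ - γ| ^ (p - 1) with hgdef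
  have hg_nonneg : ∀ θ, 0 ≤ g θ := fun θ => by
    exact mul_nonneg hp0.le (Real.rpow_nonneg (abs_nonneg _) _)
  set S : ℝ := ∑ v, G.μ v * |x v - γ| ^ p with hSdef
  set Θ : ℝ → Finset (Fin N) := fun θ => Finset.univ.filter fun v => θ < x v with hΘdef
  set hfun : ℝ → ℝ := fun θ => if γ ≤ θ then G.vol (Θ θ) else G.vol ((Θ θ)ᶜ) with hhdef
  -- volume basics
  have hvol_nonneg : ∀ T : Finset (Fin N), 0 ≤ G.vol T :=
    fun T => Finset.sum_nonneg fun v _ => (G.μ_pos v).le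
  have hvol_mono : ∀ T T' : Finset (Fin N), T ⊆ T' → G.vol T ≤ G.vol T' :=
    fun T T' hTT => Finset.sum_le_sum_of_subset_of_nonneg hTT fun v _ _ => (G.μ_pos v).le
  have hvol_split : ∀ T : Finset (Fin N), G.vol T + G.vol Tᶜ = G.vol Finset.univ :=
    fun T => Finset.sum_add_sum_compl T G.μ
  have hvolB_nonneg : ∀ T : Finset (Fin N), 0 ≤ G.volB T := fun T =>
    Finset.sum_nonneg fun e he => mul_nonneg (G.θ_pos e he).le (G.w_nonneg e he T)
  have hcompl : ∀ θ : ℝ, (Θ θ)ᶜ = Finset.univ.filter fun v => x v ≤ θ := by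
    intro θ
    simp only [hΘdef]
    rw [Finset.compl_filter]
    exact Finset.filter_congr fun v _ => by simp [not_lt]
  -- median comparisons
  have hminle : ∀ θ : ℝ, γ ≤ θ → G.vol (Θ θ) ≤ G.vol ((Θ θ)ᶜ) := by
    intro θ hγθ
    have h1 : G.vol (Θ θ) ≤ ∑ v ∈ Finset.univ.filter (fun v => γ < x v), G.μ v := by
      refine hvol_mono _ _ fun v hv => ?_
      simp only [hΘdef] at hv
      simp only [Finset.mem_filter, Finset.mem_univ, true_and] at hv ⊢
      exact lt_of_le_of_lt hγθ hv
    have h2 := hvol_split (Θ θ)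
    have h3 : G.vol Finset.univ = ∑ v, G.μ v := rfl
    rw [h3] at h2
    have := hmed1
    simp only [SubmodularHypergraph.vol] at h1 h2 ⊢
    linarith
  have hminge : ∀ θ : ℝ, θ < γ → G.vol ((Θ θ)ᶜ) ≤ G.vol (Θ θ) := by
    intro θ hθγ
    have h1 : G.vol ((Θ θ)ᶜ) ≤ ∑ v ∈ Finset.univ.filter (fun v => x v < γ), G.μ v := by
      rw [hcompl θ]
      refine hvol_mono _ _ fun v hv => ?_
      simp only [Finset.mem_filter, Finset.mem_univ, true_and] at hv ⊢
      exact lt_of_le_of_lt hv hθγ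
    have h2 := hvol_split (Θ θ)
    have h3 : G.vol Finset.univ = ∑ v, G.μ v := rfl
    rw [h3] at h2
    have := hmed2
    simp only [SubmodularHypergraph.vol] at h1 h2 ⊢
    linarith
  -- the threshold set and cstar
  set cset : Set ℝ := {c : ℝ | ∃ θ : ℝ, a ≤ θ ∧ θ < b ∧
      c = G.conductance (Finset.univ.filter fun v => θ < x v)} with hcsetdef
  set cstar := sInf cset with hcstardef
  have hcset_nonneg : ∀ c ∈ cset, 0 ≤ c := by
    rintro c ⟨θ, -, -, rfl⟩
    exact div_nonneg (hvolB_nonneg _) (le_min (hvol_nonneg _) (hvol_nonneg _))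
  have hcset_ne : cset.Nonempty := ⟨_, a, le_rfl, hab, rfl⟩
  have hcset_bdd : BddBelow cset := ⟨0, hcset_nonneg⟩
  have hcstar_nonneg : 0 ≤ cstar := le_csInf hcset_ne hcset_nonneg
  -- key pointwise bound
  have hkey : ∀ θ ∈ Set.Icc a b, cstar * hfun θ ≤ G.volB (Θ θ) := by
    rintro θ ⟨h1, h2⟩
    rcases eq_or_lt_of_le h2 with heq | h2'
    · have hΘb : Θ θ = ∅ := by
        simp only [hΘdef]
        refine Finset.filter_false_of_mem fun v _ => not_lt.mpr ?_
        rw [heq]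
        exact hxb v
      have hγθ : γ ≤ θ := by rw [heq]; exact hγb
      have hfb : hfun θ = 0 := by
        simp only [hhdef]
        simp only [if_pos hγθ, hΘb]
        simp [SubmodularHypergraph.vol]
      have hvb : G.volB (Θ θ) = 0 := by
        rw [hΘb]
        simp only [SubmodularHypergraph.volB]
        refine Finset.sum_eq_zero fun e he => ?_
        rw [G.w_empty e he, mul_zero]
      rw [hfb, hvb, mul_zero]
    · have hcle : cstar ≤ G.conductance (Θ θ) := csInf_le hcset_bdd ⟨θ, h1, h2', rfl⟩
      have hvolp : 0 < G.vol (Θ θ) := by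
        have hmem : vmax ∈ Θ θ := by
          simp only [hΘdef]; exact Finset.mem_filter.mpr ⟨Finset.mem_univ _, hvmax ▸ h2'⟩
        refine lt_of_lt_of_le (G.μ_pos vmax) ?_
        exact Finset.single_le_sum (fun v _ => (G.μ_pos v).le) hmem
      have hvolcp : 0 < G.vol ((Θ θ)ᶜ) := by
        have hmem : vmin ∈ (Θ θ)ᶜ := by
          rw [hcompl θ]
          exact Finset.mem_filter.mpr ⟨Finset.mem_univ _, hvmin ▸ h1⟩
        refine lt_of_lt_of_le (G.μ_pos vmin) ?_
        exact Finset.single_le_sum (fun v _ => (G.μ_pos v).le) hmem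
      have hminpos : 0 < min (G.vol (Θ θ)) (G.vol ((Θ θ)ᶜ)) := lt_min hvolp hvolcp
      have hc2 : cstar * min (G.vol (Θ θ)) (G.vol ((Θ θ)ᶜ)) ≤ G.volB (Θ θ) := by
        rw [SubmodularHypergraph.conductance] at hcle
        exact (le_div_iff₀ hminpos).mp hcle
      have hle_min : hfun θ ≤ min (G.vol (Θ θ)) (G.vol ((Θ θ)ᶜ)) := by
        simp only [hhdef]
        by_cases hγθ : γ ≤ θ
        · rw [if_pos hγθ]; exact le_min le_rfl (hminle θ hγθ)
        · rw [if_neg hγθ]; exact le_min (hminge θ (not_le.mp hγθ)) le_rfl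
      calc cstar * hfun θ ≤ cstar * min (G.vol (Θ θ)) (G.vol ((Θ θ)ᶜ)) :=
            mul_le_mul_of_nonneg_left hle_min hcstar_nonneg
        _ ≤ G.volB (Θ θ) := hc2
  -- decomposition of hfun * g
  set hv : Fin N → ℝ → ℝ := fun v θ => if γ ≤ θ then (if θ < x v then (1:ℝ) else 0)
      else (if x v ≤ θ then 1 else 0) with hvdef
  have hdecomp : ∀ θ : ℝ, hfun θ * g θ = ∑ v, G.μ v * (hv v θ * g θ) := by
    intro θ
    simp only [hhdef, hvdef]
    by_cases hγθ : γ ≤ θ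
    · simp only [if_pos hγθ]
      simp only [hΘdef]
      simp only [SubmodularHypergraph.vol]
      rw [Finset.sum_filter, Finset.sum_mul]
      refine Finset.sum_congr rfl fun v _ => ?_
      split_ifs <;> ring
    · simp only [if_neg hγθ]
      rw [hcompl θ]
      simp only [SubmodularHypergraph.vol]
      rw [Finset.sum_filter, Finset.sum_mul]
      refine Finset.sum_congr rfl fun v _ => ?_
      split_ifs <;> ring
  -- integrability
  have hWmeas : ∀ e, Measurable fun θ : ℝ => G.w e (Θ θ) := fun e =>
    measurable_filter_step (G.w e) x
  have hWbdd : ∀ e ∈ G.E, ∀ θ : ℝ, |G.w e (Θ θ)| ≤ 1 := fun e he θ => by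
    rw [abs_of_nonneg (G.w_nonneg e he _)]; exact G.w_le_one e he _
  have hIIWg : ∀ e ∈ G.E, IntervalIntegrable (fun θ => G.w e (Θ θ) * g θ) volume a b :=
    fun e he => II_step_weight (hWmeas e) (hWbdd e he) γ hp a b
  have hIIW : ∀ e ∈ G.E, IntervalIntegrable (fun θ => G.w e (Θ θ)) volume a b :=
    fun e he => II_of_bdd (hWmeas e) fun θ _ => hWbdd e he θ
  have hIIhv : ∀ v : Fin N, IntervalIntegrable (fun θ => hv v θ * g θ) volume a b :=
    fun v => II_step_weight (measurable_hv γ (x v)) (bdd_hv γ (x v)) γ hp a b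
  set F1 : ℝ → ℝ := fun θ => ∑ v, G.μ v * (hv v θ * g θ) with hF1def
  have hIIF1 : IntervalIntegrable F1 volume a b := by
    rw [hF1def]
    have hsum := IntervalIntegrable.sum (f := fun v (θ:ℝ) => G.μ v * (hv v θ * g θ)) Finset.univ
      (μ := volume) (a := a) (b := b) fun v _ => (hIIhv v).const_mul (G.μ v)
    have hfn : (∑ v : Fin N, fun θ:ℝ => G.μ v * (hv v θ * g θ))
        = fun θ:ℝ => ∑ v, G.μ v * (hv v θ * g θ) := by
      funext θ; simp
    exact hfn ▸ hsum
  have hintF1 : ∫ θ in a..b, F1 θ = S := by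
    rw [hF1def]
    rw [intervalIntegral.integral_finset_sum (f := fun v (θ:ℝ) => G.μ v * (hv v θ * g θ))
      fun v _ => (hIIhv v).const_mul (G.μ v)]
    rw [hSdef]
    refine Finset.sum_congr rfl fun v _ => ?_
    rw [intervalIntegral.integral_const_mul]
    congr 1
    exact hv_integral hp (hax v) (hxb v) haγ hγb
  set F2 : ℝ → ℝ := fun θ => G.volB (Θ θ) * g θ with hF2def
  have hF2sum : ∀ θ, F2 θ = ∑ e ∈ G.E, G.θ e * (G.w e (Θ θ) * g θ) := by
    intro θ
    rw [hF2def]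
    simp only [SubmodularHypergraph.volB]
    rw [Finset.sum_mul]
    exact Finset.sum_congr rfl fun e _ => by ring
  have hIIF2 : IntervalIntegrable F2 volume a b := by
    have : F2 = fun θ => ∑ e ∈ G.E, G.θ e * (G.w e (Θ θ) * g θ) := funext hF2sum
    rw [this]
    have hsum := IntervalIntegrable.sum (f := fun e (θ:ℝ) => G.θ e * (G.w e (Θ θ) * g θ)) G.E
      (μ := volume) (a := a) (b := b) fun e he => (hIIWg e he).const_mul (G.θ e)
    have hfn : (∑ e ∈ G.E, fun θ:ℝ => G.θ e * (G.w e (Θ θ) * g θ))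
        = fun θ:ℝ => ∑ e ∈ G.E, G.θ e * (G.w e (Θ θ) * g θ) := by
      funext θ; simp
    exact hfn ▸ hsum
  -- main integral inequality
  have hmain1 : cstar * S ≤ ∫ θ in a..b, F2 θ := by
    have hmono : ∀ θ ∈ Set.Icc a b, cstar * F1 θ ≤ F2 θ := by
      intro θ hθ
      rw [hF1def]
      simp only
      rw [← hdecomp θ, hF2def]
      simp only
      rw [← mul_assoc]
      exact mul_le_mul_of_nonneg_right (hkey θ hθ) (hg_nonneg θ)
    calc cstar * S = ∫ θ in a..b, cstar * F1 θ := by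
          rw [intervalIntegral.integral_const_mul, hintF1]
      _ ≤ ∫ θ in a..b, F2 θ :=
          intervalIntegral.integral_mono_on hab.le (hIIF1.const_mul cstar) hIIF2 hmono
  -- edge maxima
  set M : Finset (Fin N) → ℝ :=
    fun e => (insert (0:ℝ) (e.image fun v => |x v - γ|)).max' (Finset.insert_nonempty _ _)
    with hMdef
  have hM_nonneg : ∀ e, 0 ≤ M e := fun e =>
    Finset.le_max' _ 0 (Finset.mem_insert_self _ _)
  have hM_ge : ∀ e, ∀ v ∈ e, |x v - γ| ≤ M e := fun e v hv =>
    Finset.le_max' _ (|x v - γ|)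
      (Finset.mem_insert_of_mem (Finset.mem_image_of_mem (fun v => |x v - γ|) hv))
  have hMp_le : ∀ e, M e ^ p ≤ ∑ v ∈ e, |x v - γ| ^ p := by
    intro e
    have hmem : M e ∈ insert (0:ℝ) (e.image fun v => |x v - γ|) :=
      Finset.max'_mem _ _
    rcases Finset.mem_insert.mp hmem with h0 | himg
    · rw [h0, Real.zero_rpow (ne_of_gt hp0)]
      exact Finset.sum_nonneg fun v _ => Real.rpow_nonneg (abs_nonneg _) _
    · obtain ⟨u, hu, hxu⟩ := Finset.mem_image.mp himg
      rw [← hxu]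
      exact Finset.single_le_sum (f := fun v => |x v - γ| ^ p)
        (fun v _ => Real.rpow_nonneg (abs_nonneg _) _) hu
  -- pointwise edge bound
  have hWg_le : ∀ e ∈ G.E, ∀ θ : ℝ, G.w e (Θ θ) * g θ ≤ G.w e (Θ θ) * (p * M e ^ (p - 1)) := by
    intro e he θ
    rcases eq_or_lt_of_le (G.w_nonneg e he (Θ θ)) with hw0 | hwpos
    · rw [← hw0, zero_mul, zero_mul]
    · have hex1 : ∃ u ∈ e, θ < x u := by
        by_contra hcon
        push_neg at hcon
        have hΘe : Θ θ ∩ e = ∅ := by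
          rw [Finset.eq_empty_iff_forall_notMem]
          intro u hu
          rw [Finset.mem_inter, hΘdef, Finset.mem_filter] at hu
          exact absurd hu.1.2 (not_lt.mpr (hcon u hu.2))
        have : G.w e (Θ θ) = 0 := by
          rw [G.w_inter e he, hΘe, G.w_empty e he]
        exact absurd this.symm (ne_of_lt hwpos)
      have hex2 : ∃ u ∈ e, x u ≤ θ := by
        by_contra hcon
        push_neg at hcon
        have hΘe : Θ θ ∩ e = e := by
          rw [Finset.inter_eq_right]
          intro u hu
          rw [hΘdef, Finset.mem_filter]
          exact ⟨Finset.mem_univ _, hcon u hu⟩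
        have hwee : G.w e e = 0 := by
          rw [G.w_symm e he e (le_refl e), Finset.sdiff_self, G.w_empty e he]
        have : G.w e (Θ θ) = 0 := by
          rw [G.w_inter e he, hΘe, hwee]
        exact absurd this.symm (ne_of_lt hwpos)
      obtain ⟨u1, hu1, hu1'⟩ := hex1
      obtain ⟨u2, hu2, hu2'⟩ := hex2
      have habs : |θ - γ| ≤ M e := by
        rw [abs_sub_le_iff]
        constructor
        · calc θ - γ ≤ x u1 - γ := by linarith
            _ ≤ |x u1 - γ| := le_abs_self _
            _ ≤ M e := hM_ge e u1 hu1
        · calc γ - θ ≤ γ - x u2 := by linarith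
            _ ≤ |x u2 - γ| := by rw [abs_sub_comm]; exact le_abs_self _
            _ ≤ M e := hM_ge e u2 hu2
      refine mul_le_mul_of_nonneg_left ?_ (G.w_nonneg e he _)
      refine mul_le_mul_of_nonneg_left ?_ hp0.le
      exact Real.rpow_le_rpow (abs_nonneg _) habs (by linarith)
  have hfe_eq : ∀ e, (∫ θ in a..b, G.w e (Θ θ)) = G.fe e x := fun e => rfl
  have hfe_nonneg : ∀ e ∈ G.E, 0 ≤ G.fe e x := by
    intro e he
    rw [← hfe_eq e]
    exact intervalIntegral.integral_nonneg hab.le fun θ _ => G.w_nonneg e he _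
  have hedge : ∀ e ∈ G.E,
      (∫ θ in a..b, G.w e (Θ θ) * g θ) ≤ p * (G.fe e x * M e ^ (p - 1)) := by
    intro e he
    have h1 : (∫ θ in a..b, G.w e (Θ θ) * g θ)
        ≤ ∫ θ in a..b, G.w e (Θ θ) * (p * M e ^ (p - 1)) := by
      refine intervalIntegral.integral_mono_on hab.le (hIIWg e he)
        ((hIIW e he).mul_const _) fun θ _ => hWg_le e he θ
    rw [intervalIntegral.integral_mul_const, hfe_eq e] at h1
    calc (∫ θ in a..b, G.w e (Θ θ) * g θ) ≤ G.fe e x * (p * M e ^ (p - 1)) := h1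
      _ = p * (G.fe e x * M e ^ (p - 1)) := by ring
  -- sum over edges
  have hmain2 : (∫ θ in a..b, F2 θ)
      ≤ p * ∑ e ∈ G.E, G.θ e * (G.fe e x * M e ^ (p - 1)) := by
    have h1 : (∫ θ in a..b, F2 θ) = ∑ e ∈ G.E, G.θ e * ∫ θ in a..b, G.w e (Θ θ) * g θ := by
      have : F2 = fun θ => ∑ e ∈ G.E, G.θ e * (G.w e (Θ θ) * g θ) := funext hF2sum
      rw [this, intervalIntegral.integral_finset_sum (f := fun e (θ:ℝ) => G.θ e * (G.w e (Θ θ) * g θ))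
        fun e he => (hIIWg e he).const_mul (G.θ e)]
      exact Finset.sum_congr rfl fun e _ => intervalIntegral.integral_const_mul _ _
    rw [h1, Finset.mul_sum]
    refine Finset.sum_le_sum fun e he => ?_
    calc G.θ e * ∫ θ in a..b, G.w e (Θ θ) * g θ
        ≤ G.θ e * (p * (G.fe e x * M e ^ (p - 1))) :=
          mul_le_mul_of_nonneg_left (hedge e he) (G.θ_pos e he).le
      _ = p * (G.θ e * (G.fe e x * M e ^ (p - 1))) := by ring
  -- Hölder
  set Q : ℝ := G.Q p x with hQdef
  set T : ℝ := ∑ e ∈ G.E, G.θ e * M e ^ p with hTdef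
  have hholder : ∑ e ∈ G.E, G.θ e * (G.fe e x * M e ^ (p - 1))
      ≤ Q ^ (1/p) * T ^ ((p - 1)/p) := by
    have := holder_w G.E G.θ (fun e => G.fe e x) M hp
      (fun e he => (G.θ_pos e he).le) (fun e he => hfe_nonneg e he) (fun e _ => hM_nonneg e)
    rw [hQdef, hTdef]
    exact this
  have hQ_nonneg : 0 ≤ Q := by
    rw [hQdef]
    exact Finset.sum_nonneg fun e he =>
      mul_nonneg (G.θ_pos e he).le (Real.rpow_nonneg (hfe_nonneg e he) _)
  -- T ≤ tau * S
  have hτ_ub : ∀ v, G.degree v ≤ G.tau * G.μ v := by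
    intro v
    have h1 : G.degree v / G.μ v ≤ G.tau := by
      rw [SubmodularHypergraph.tau]
      exact le_ciSup (f := fun v => G.degree v / G.μ v) ((Set.finite_range _).bddAbove) v
    exact (div_le_iff₀ (G.μ_pos v)).mp h1
  have hdeg_nonneg : ∀ v, 0 ≤ G.degree v := fun v =>
    Finset.sum_nonneg fun e he => (G.θ_pos e (Finset.mem_filter.mp he).1).le
  have hτ_nonneg : 0 ≤ G.tau := by
    have := hτ_ub ⟨0, Nat.pos_of_ne_zero (NeZero.ne N)⟩
    nlinarith [hdeg_nonneg (⟨0, Nat.pos_of_ne_zero (NeZero.ne N)⟩ : Fin N),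
      G.μ_pos (⟨0, Nat.pos_of_ne_zero (NeZero.ne N)⟩ : Fin N)]
  have hT_le : T ≤ G.tau * S := by
    have h1 : T ≤ ∑ e ∈ G.E, G.θ e * ∑ v ∈ e, |x v - γ| ^ p := by
      rw [hTdef]
      exact Finset.sum_le_sum fun e he =>
        mul_le_mul_of_nonneg_left (hMp_le e) (G.θ_pos e he).le
    have h2 : ∑ e ∈ G.E, G.θ e * ∑ v ∈ e, |x v - γ| ^ p
        = ∑ v, G.degree v * |x v - γ| ^ p := by
      have e1 : ∀ e ∈ G.E, G.θ e * ∑ v ∈ e, |x v - γ| ^ p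
          = ∑ v, (if v ∈ e then G.θ e * |x v - γ| ^ p else 0) := by
        intro e _
        rw [Finset.mul_sum, Finset.sum_ite_mem, Finset.univ_inter]
      rw [Finset.sum_congr rfl e1, Finset.sum_comm]
      refine Finset.sum_congr rfl fun v _ => ?_
      rw [SubmodularHypergraph.degree, Finset.sum_filter, Finset.sum_mul]
      refine Finset.sum_congr rfl fun e _ => ?_
      split_ifs <;> ring
    have h3 : ∑ v, G.degree v * |x v - γ| ^ p ≤ ∑ v, G.tau * (G.μ v * |x v - γ| ^ p) := by
      refine Finset.sum_le_sum fun v _ => ?_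
      rw [← mul_assoc]
      exact mul_le_mul_of_nonneg_right (hτ_ub v) (Real.rpow_nonneg (abs_nonneg _) _)
    rw [← Finset.mul_sum] at h3
    rw [hSdef]
    linarith
  have hT_nonneg : 0 ≤ T := by
    rw [hTdef]
    exact Finset.sum_nonneg fun e he =>
      mul_nonneg (G.θ_pos e he).le (Real.rpow_nonneg (hM_nonneg e) _)
  -- positivity of Z and S
  have hZle : G.Z p x ≤ S := by
    rw [SubmodularHypergraph.Z]
    refine ciInf_le ⟨0, ?_⟩ γ
    rintro y ⟨c, rfl⟩
    exact Finset.sum_nonneg fun v _ =>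
      mul_nonneg (G.μ_pos v).le (Real.rpow_nonneg (abs_nonneg _) _)
  have hZpos : 0 < G.Z p x := by
    rw [← hZ]
    rw [SubmodularHypergraph.normLpPow]
    have hvne : x u0 ≠ 0 ∨ x v0 ≠ 0 := by
      by_contra hcon
      push_neg at hcon
      exact huv (hcon.1.trans hcon.2.symm)
    obtain ⟨w0, hw0⟩ : ∃ w0, x w0 ≠ 0 := by
      rcases hvne with h | h
      · exact ⟨u0, h⟩
      · exact ⟨v0, h⟩
    have hterm : 0 < G.μ w0 * |x w0| ^ p :=
      mul_pos (G.μ_pos w0) (Real.rpow_pos_of_pos (abs_pos.mpr hw0) p)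
    refine lt_of_lt_of_le hterm ?_
    refine Finset.single_le_sum (f := fun v => G.μ v * |x v| ^ p) (fun v _ => ?_)
      (Finset.mem_univ w0)
    exact mul_nonneg (G.μ_pos v).le (Real.rpow_nonneg (abs_nonneg _) _)
  have hSpos : 0 < S := lt_of_lt_of_le hZpos hZle
  -- combine
  have hchain : cstar * S ≤ p * (Q ^ (1/p) * (G.tau * S) ^ ((p - 1)/p)) := by
    have h4 : T ^ ((p - 1)/p) ≤ (G.tau * S) ^ ((p - 1)/p) :=
      Real.rpow_le_rpow hT_nonneg hT_le (div_nonneg (by linarith) hp0.le)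
    have h5 : Q ^ (1/p) * T ^ ((p - 1)/p) ≤ Q ^ (1/p) * (G.tau * S) ^ ((p - 1)/p) :=
      mul_le_mul_of_nonneg_left h4 (Real.rpow_nonneg hQ_nonneg _)
    calc cstar * S ≤ ∫ θ in a..b, F2 θ := hmain1
      _ ≤ p * ∑ e ∈ G.E, G.θ e * (G.fe e x * M e ^ (p - 1)) := hmain2
      _ ≤ p * (Q ^ (1/p) * T ^ ((p - 1)/p)) := by
          exact mul_le_mul_of_nonneg_left hholder hp0.le
      _ ≤ p * (Q ^ (1/p) * (G.tau * S) ^ ((p - 1)/p)) :=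
          mul_le_mul_of_nonneg_left h5 hp0.le
  -- final algebra
  have hfinal : p * (Q ^ (1/p) * (G.tau * S) ^ ((p - 1)/p)) / S
      ≤ p * G.tau ^ ((p - 1)/p) * G.Rq p x ^ (1/p) := by
    rw [SubmodularHypergraph.Rq, ← hQdef]
    rw [Real.mul_rpow hτ_nonneg hSpos.le]
    rw [Real.div_rpow hQ_nonneg hZpos.le]
    have hSe : S ^ ((p - 1)/p) / S = S ^ (-(1/p)) := by
      rw [show S ^ ((p-1)/p) / S = S ^ ((p-1)/p) / S ^ (1:ℝ) by rw [Real.rpow_one]]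
      rw [← Real.rpow_sub hSpos]
      congr 1
      field_simp
      ring
    have hSZ2 : S ^ (-(1/p)) ≤ (G.Z p x) ^ (-(1/p)) :=
      Real.rpow_le_rpow_of_nonpos hZpos hZle (neg_nonpos.mpr (by positivity))
    have hZinv : (G.Z p x) ^ (-(1/p)) = 1 / (G.Z p x) ^ (1/p) := by
      rw [Real.rpow_neg hZpos.le]
      exact (one_div _).symm
    calc p * (Q ^ (1/p) * (G.tau ^ ((p - 1)/p) * S ^ ((p - 1)/p))) / S
        = p * G.tau ^ ((p - 1)/p) * Q ^ (1/p) * (S ^ ((p - 1)/p) / S) := by ring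
      _ = p * G.tau ^ ((p - 1)/p) * Q ^ (1/p) * S ^ (-(1/p)) := by rw [hSe]
      _ ≤ p * G.tau ^ ((p - 1)/p) * Q ^ (1/p) * (G.Z p x) ^ (-(1/p)) := by
          refine mul_le_mul_of_nonneg_left hSZ2 ?_
          positivity
      _ = p * G.tau ^ ((p - 1)/p) * (Q ^ (1/p) / (G.Z p x) ^ (1/p)) := by
          rw [hZinv]; ring
  have hcs : cstar ≤ p * (Q ^ (1/p) * (G.tau * S) ^ ((p - 1)/p)) / S :=
    (le_div_iff₀ hSpos).mpr hchain
  exact le_trans hcs hfinal
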